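/- Boundary difference-quotient inequality: let Φ be holomorphic on an open neighborhood of the closed unit disc and let θ ∈ [0, 2π). Then ∫₀^{2π} |(Φ(e^{iψ}) − Φ(e^{iθ}))/(e^{iψ} − e^{iθ})|² dψ ≤ π² ∫₀^{2π} |Φ′(e^{iψ})|² dψ, where the integrand on the left is interpreted as |Φ′(e^{iθ})|² at ψ = θ. -/

import Mathlib

open MeasureTheory Real

/-- The `n`-th Fourier coefficient of a `2π`-periodic function `f : ℝ → ℝ`. -/
noncomputable def fourierC (f : ℝ → ℝ) (n : ℤ) : ℂ :=
  (1 / (2 * π)) * ∫ θ in (0:ℝ)..(2 * π), (f θ : ℂ) * Complex.exp (-Complex.I * (n : ℂ) * (θ : ℂ))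

/-- The Hilbert transform on the circle, sending `Σ cₙ e^{inθ}` to `Σ (−i sgn n) cₙ e^{inθ}`. -/
noncomputable def hilbertT (f : ℝ → ℝ) (θ : ℝ) : ℝ :=
  (∑' n : ℤ, -Complex.I * ((n.sign : ℤ) : ℂ) * fourierC f n *
    Complex.exp (Complex.I * (n : ℂ) * (θ : ℂ))).re

private noncomputable def cexp (t : ℝ) : ℂ := Complex.exp (Complex.I * t)

private lemma cexp_def (t : ℝ) : Complex.exp (Complex.I * t) = cexp t := rfl

private lemma cexp_circle (t : ℝ) : cexp t = circleMap 0 1 t := by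
  simp [cexp, circleMap, mul_comm]

private lemma continuous_cexp : Continuous cexp := by
  unfold cexp
  exact Complex.continuous_exp.comp (continuous_const.mul Complex.continuous_ofReal)

private lemma norm_cexp (t : ℝ) : ‖cexp t‖ = 1 := by
  simp [cexp, Complex.norm_exp]

private lemma cexp_mem (t : ℝ) : cexp t ∈ Metric.closedBall (0:ℂ) 1 := by
  rw [Metric.mem_closedBall, dist_eq_norm, sub_zero, norm_cexp]

private lemma cexp_periodic : Function.Periodic cexp (2 * π) := by
  intro t
  unfold cexp
  push_cast
  rw [mul_add, Complex.exp_add]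
  have h : Complex.I * (2 * π) = 2 * π * Complex.I := by ring
  rw [h, Complex.exp_two_pi_mul_I, mul_one]

private lemma cexp_ne {a b : ℝ} (h1 : a ≠ b) (h2 : |a - b| < 2 * π) : cexp a ≠ cexp b := by
  intro h
  rw [cexp, cexp, Complex.exp_eq_exp_iff_exists_int] at h
  obtain ⟨n, hn⟩ := h
  have h2' : Complex.I * a = Complex.I * ((b : ℂ) + n * (2 * π)) := by rw [hn]; ring
  have h3 := mul_left_cancel₀ Complex.I_ne_zero h2'
  have h4 : a = b + (n : ℝ) * (2 * π) := by exact_mod_cast h3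
  have hn0 : n ≠ 0 := by
    rintro rfl
    simp at h4
    exact h1 h4
  have h5 : (1 : ℝ) ≤ |(n : ℝ)| := by exact_mod_cast Int.one_le_abs hn0
  have hab : a - b = (n : ℝ) * (2 * π) := by linarith
  have habs : |a - b| = |(n : ℝ)| * (2 * π) := by
    rw [hab, abs_mul, abs_of_pos Real.two_pi_pos]
  nlinarith [Real.pi_pos]

private lemma norm_cexp_sub (a b : ℝ) : ‖cexp b - cexp a‖ = ‖cexp (b - a) - 1‖ := by
  have h : cexp b - cexp a = cexp a * (cexp (b - a) - 1) := by
    rw [mul_sub, mul_one, cexp, cexp, cexp, ← Complex.exp_add]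
    congr 2
    push_cast
    ring
  rw [h, norm_mul, norm_cexp, one_mul]

private lemma norm_cexp_sub_one {x : ℝ} (h0 : 0 ≤ x) (hx : x ≤ π) :
    (2 / π) * x ≤ ‖cexp x - 1‖ := by
  have hπ := Real.pi_pos
  have h2 : ‖cexp x - 1‖ ^ 2 = 2 - 2 * Real.cos x := by
    rw [cexp, mul_comm, Complex.sq_norm, Complex.normSq_apply]
    simp [Complex.sub_re, Complex.sub_im, Complex.exp_ofReal_mul_I_re,
      Complex.exp_ofReal_mul_I_im]
    nlinarith [Real.sin_sq_add_cos_sq x]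
  have hcos : 2 - 2 * Real.cos x = (2 * Real.sin (x / 2)) ^ 2 := by
    have hc2 := Real.cos_two_mul (x / 2)
    have hsc := Real.sin_sq_add_cos_sq (x / 2)
    have h3 : 2 * (x / 2) = x := by ring
    rw [h3] at hc2
    nlinarith
  have hs0 : 0 ≤ Real.sin (x / 2) :=
    Real.sin_nonneg_of_nonneg_of_le_pi (by linarith) (by linarith)
  have hjordan : (2 / π) * (x / 2) ≤ Real.sin (x / 2) :=
    Real.mul_le_sin (by linarith) (by linarith)
  calc (2 / π) * x = 2 * ((2 / π) * (x / 2)) := by ring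
    _ ≤ 2 * Real.sin (x / 2) := by linarith
    _ = Real.sqrt ((2 * Real.sin (x / 2)) ^ 2) := (Real.sqrt_sq (by linarith)).symm
    _ = Real.sqrt (‖cexp x - 1‖ ^ 2) := by rw [h2, hcos]
    _ = ‖cexp x - 1‖ := Real.sqrt_sq (norm_nonneg _)

private lemma chord {a b : ℝ} (hab : a ≤ b) (h : b - a ≤ π) :
    (2 / π) * (b - a) ≤ ‖cexp b - cexp a‖ := by
  rw [norm_cexp_sub]
  exact norm_cexp_sub_one (by linarith) h

private lemma hasDerivAt_cexp (t : ℝ) : HasDerivAt cexp (Complex.I * cexp t) t := by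
  have h := hasDerivAt_circleMap 0 1 t
  have he : circleMap 0 1 = cexp := by funext s; rw [cexp_circle]
  rw [he] at h
  convert h using 1
  rw [cexp_circle]
  simp [circleMap]
  ring

private lemma hardy (h : ℝ → ℝ) (hc : Continuous h) {T : ℝ} (hT : 0 < T) :
    (∫ x in (0:ℝ)..T, ((∫ t in (0:ℝ)..x, h t) / x) ^ 2) ≤ 4 * ∫ x in (0:ℝ)..T, h x ^ 2 := by
  obtain ⟨C, hC⟩ := (isCompact_Icc (a := (0:ℝ)) (b := T)).exists_bound_of_continuousOn
    hc.continuousOn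
  have hC0 : 0 ≤ C := le_trans (norm_nonneg (h 0)) (hC 0 ⟨le_refl _, hT.le⟩)
  set H : ℝ → ℝ := fun x => ∫ t in (0:ℝ)..x, h t with hHdef
  have hfold : ∀ x : ℝ, (∫ t in (0:ℝ)..x, h t) = H x := fun _ => rfl
  simp only [hfold]
  have Hcont : Continuous H :=
    intervalIntegral.continuous_primitive (fun a b => hc.intervalIntegrable a b) 0
  have Hderiv : ∀ x : ℝ, HasDerivAt H (h x) x := fun x =>
    (hc.integral_hasStrictDerivAt 0 x).hasDerivAt
  have Hbound : ∀ x ∈ Set.Icc (0:ℝ) T, |H x| ≤ C * x := by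
    intro x hx
    have hb : ∀ t ∈ Set.uIoc (0:ℝ) x, ‖h t‖ ≤ C := by
      intro t ht
      rw [Set.uIoc_of_le hx.1] at ht
      exact hC t ⟨ht.1.le, le_trans ht.2 hx.2⟩
    have := intervalIntegral.norm_integral_le_of_norm_le_const hb
    rwa [sub_zero, abs_of_nonneg hx.1, Real.norm_eq_abs] at this
  have FboundIoc : ∀ x ∈ Set.Ioc (0:ℝ) T, (H x / x) ^ 2 ≤ C ^ 2 := by
    intro x hx
    have h1 : |H x| ≤ C * x := Hbound x ⟨hx.1.le, hx.2⟩
    have h2 : |H x / x| ≤ C := by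
      rw [abs_div, abs_of_pos hx.1, div_le_iff₀ hx.1]
      exact h1
    calc (H x / x) ^ 2 = |H x / x| ^ 2 := (sq_abs _).symm
      _ ≤ C ^ 2 := by nlinarith [abs_nonneg (H x / x)]
  have Fmeas : Measurable (fun x => (H x / x) ^ 2) :=
    (Hcont.measurable.div measurable_id).pow_const 2
  have Fint : IntervalIntegrable (fun x => (H x / x) ^ 2) volume 0 T := by
    rw [intervalIntegrable_iff_integrableOn_Ioc_of_le hT.le]
    refine Measure.integrableOn_of_bounded (M := C ^ 2) measure_Ioc_lt_top.ne
      Fmeas.aestronglyMeasurable ?_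
    refine (ae_restrict_iff' measurableSet_Ioc).2 (ae_of_all _ fun x hx => ?_)
    rw [Real.norm_eq_abs, abs_of_nonneg (sq_nonneg _)]
    exact FboundIoc x hx
  have hsq_int : ∀ a b : ℝ, IntervalIntegrable (fun x => h x ^ 2) volume a b := fun a b =>
    (hc.pow 2).intervalIntegrable a b
  have key : ∀ ε : ℝ, 0 < ε → ε ≤ T →
      (∫ x in ε..T, (H x / x) ^ 2) ≤ 4 * (∫ x in (0:ℝ)..T, h x ^ 2) + 2 * (C ^ 2 * ε) := by
    intro ε hε hεT
    have hcomb : ∀ x ∈ Set.uIcc ε T, HasDerivAt (fun y => H y ^ 2 / y)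
        (2 * h x * H x / x - (H x / x) ^ 2) x := by
      intro x hx
      rw [Set.uIcc_of_le hεT] at hx
      have hx0 : x ≠ 0 := (lt_of_lt_of_le hε hx.1).ne'
      have h1 : HasDerivAt (fun y => H y ^ 2) (2 * H x * h x) x := by
        have := (Hderiv x).fun_pow 2
        simpa [mul_comm, mul_assoc, mul_left_comm] using this
      have h2 := h1.div (hasDerivAt_id x) hx0
      refine h2.congr_deriv ?_
      simp only [id]
      field_simp
    have hFint' : IntervalIntegrable (fun x => (H x / x) ^ 2) volume ε T :=
      Fint.mono_set (Set.uIcc_subset_uIcc (Set.mem_uIcc.2 (Or.inl ⟨hε.le, hεT⟩))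
        Set.right_mem_uIcc)
    have hAcont : ContinuousOn (fun x => 2 * h x * H x / x) (Set.uIcc ε T) := by
      apply ContinuousOn.div ((continuous_const.mul hc).mul Hcont).continuousOn
        continuousOn_id
      intro x hx
      rw [Set.uIcc_of_le hεT] at hx
      exact (lt_of_lt_of_le hε hx.1).ne'
    have hAint : IntervalIntegrable (fun x => 2 * h x * H x / x) volume ε T :=
      hAcont.intervalIntegrable
    have hGint : IntervalIntegrable (fun x => 2 * h x * H x / x - (H x / x) ^ 2) volume ε T :=
      hAint.sub hFint'
    have e1 := intervalIntegral.integral_eq_sub_of_hasDerivAt hcomb hGint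
    have e2 := intervalIntegral.integral_sub hAint hFint'
    have hAle : (∫ x in ε..T, 2 * h x * H x / x) ≤
        ∫ x in ε..T, (2 * h x ^ 2 + (1/2) * (H x / x) ^ 2) := by
      apply intervalIntegral.integral_mono_on hεT hAint
        (((hsq_int ε T).const_mul 2).add (hFint'.const_mul (1/2)))
      intro x hx
      have hx0 : 0 < x := lt_of_lt_of_le hε hx.1
      have hrw : 2 * h x * H x / x = 2 * (h x * (H x / x)) := by field_simp
      rw [hrw]
      nlinarith [sq_nonneg (2 * h x - H x / x)]
    have e3 : (∫ x in ε..T, (2 * h x ^ 2 + (1/2) * (H x / x) ^ 2)) =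
        2 * (∫ x in ε..T, h x ^ 2) + (1/2) * ∫ x in ε..T, (H x / x) ^ 2 := by
      rw [intervalIntegral.integral_add ((hsq_int ε T).const_mul 2) (hFint'.const_mul (1/2)),
        intervalIntegral.integral_const_mul, intervalIntegral.integral_const_mul]
    have e4 : (∫ x in ε..T, h x ^ 2) ≤ ∫ x in (0:ℝ)..T, h x ^ 2 := by
      have e5 := intervalIntegral.integral_add_adjacent_intervals (hsq_int 0 ε) (hsq_int ε T)
      have e6 : 0 ≤ ∫ x in (0:ℝ)..ε, h x ^ 2 :=
        intervalIntegral.integral_nonneg hε.le fun u _ => sq_nonneg _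
      linarith
    have hPT : 0 ≤ H T ^ 2 / T := div_nonneg (sq_nonneg _) hT.le
    have hPε : H ε ^ 2 / ε ≤ C ^ 2 * ε := by
      have hb := Hbound ε ⟨hε.le, hεT⟩
      have hmul : |H ε| * |H ε| ≤ (C * ε) * (C * ε) :=
        mul_le_mul hb hb (abs_nonneg _) (by positivity)
      rw [div_le_iff₀ hε]
      nlinarith [sq_abs (H ε)]
    linarith
  refine le_of_forall_pos_le_add fun δ hδ => ?_
  set ε : ℝ := min T (δ / (3 * C ^ 2 + 1)) with hεdef
  have hε : 0 < ε := lt_min hT (div_pos hδ (by positivity))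
  have hεT : ε ≤ T := min_le_left _ _
  have hεδ : 3 * (C ^ 2 * ε) ≤ δ := by
    have h1 : ε ≤ δ / (3 * C ^ 2 + 1) := min_le_right _ _
    rw [le_div_iff₀ (by positivity : (0:ℝ) < 3 * C ^ 2 + 1)] at h1
    nlinarith [hε.le]
  have hsplit := intervalIntegral.integral_add_adjacent_intervals
    (Fint.mono_set (Set.uIcc_subset_uIcc Set.left_mem_uIcc
      (Set.mem_uIcc.2 (Or.inl ⟨hε.le, hεT⟩))))
    (Fint.mono_set (Set.uIcc_subset_uIcc (Set.mem_uIcc.2 (Or.inl ⟨hε.le, hεT⟩))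
      Set.right_mem_uIcc))
  have hsmall : (∫ x in (0:ℝ)..ε, (H x / x) ^ 2) ≤ C ^ 2 * ε := by
    have hb : ∀ x ∈ Set.uIoc (0:ℝ) ε, ‖(H x / x) ^ 2‖ ≤ C ^ 2 := by
      intro x hx
      rw [Set.uIoc_of_le hε.le] at hx
      rw [Real.norm_eq_abs, abs_of_nonneg (sq_nonneg _)]
      exact FboundIoc x ⟨hx.1, le_trans hx.2 hεT⟩
    have := intervalIntegral.norm_integral_le_of_norm_le_const hb
    rw [sub_zero, abs_of_nonneg hε.le] at this
    exact le_trans (le_abs_self _) this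
  have hkey := key ε hε hεT
  linarith

private lemma bdd_int (φ : ℝ → ℝ) (K : ℝ) (hmeas : Measurable φ) (hbd : ∀ x, |φ x| ≤ K)
    (a b : ℝ) : IntervalIntegrable φ volume a b := by
  rw [intervalIntegrable_iff]
  refine Measure.integrableOn_of_bounded (M := K) ?_ hmeas.aestronglyMeasurable
    (ae_of_all _ fun x => by rw [Real.norm_eq_abs]; exact hbd x)
  rw [Set.uIoc]
  exact measure_Ioc_lt_top.ne

/-- Boundary difference-quotient inequality:
`∫₀^{2π} |(Φ(e^{iψ}) − Φ(e^{iθ}))/(e^{iψ} − e^{iθ})|² dψ ≤ π² ∫₀^{2π} |Φ′(e^{iψ})|² dψ`. -/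
theorem boundary_difference_quotient_inequality (Φ : ℂ → ℂ) (U : Set ℂ) (hU : IsOpen U)
    (hsub : Metric.closedBall (0:ℂ) 1 ⊆ U) (hΦ : DifferentiableOn ℂ Φ U)
    (θ : ℝ) (hθ : θ ∈ Set.Ico (0:ℝ) (2 * π)) :
    (∫ ψ in (0:ℝ)..(2 * π),
        ‖if Complex.exp (Complex.I * (ψ : ℂ)) = Complex.exp (Complex.I * (θ : ℂ)) then
            deriv Φ (Complex.exp (Complex.I * (θ : ℂ)))
          else
            (Φ (Complex.exp (Complex.I * (ψ : ℂ))) - Φ (Complex.exp (Complex.I * (θ : ℂ)))) /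
              (Complex.exp (Complex.I * (ψ : ℂ)) - Complex.exp (Complex.I * (θ : ℂ)))‖ ^ 2)
      ≤ π ^ 2 * ∫ ψ in (0:ℝ)..(2 * π), ‖deriv Φ (Complex.exp (Complex.I * (ψ : ℂ)))‖ ^ 2 := by
  have hπ := Real.pi_pos
  set g : ℝ → ℝ := fun t => ‖deriv Φ (cexp t)‖ with hgdef
  set Q : ℝ → ℝ := fun ψ => ‖if cexp ψ = cexp θ then deriv Φ (cexp θ) else
    (Φ (cexp ψ) - Φ (cexp θ)) / (cexp ψ - cexp θ)‖ ^ 2 with hQdef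
  show (∫ ψ in (0:ℝ)..(2 * π), Q ψ) ≤ π ^ 2 * ∫ ψ in (0:ℝ)..(2 * π), g ψ ^ 2
  have hmemU : ∀ t : ℝ, cexp t ∈ U := fun t => hsub (cexp_mem t)
  have hΦd : ∀ w ∈ Metric.closedBall (0:ℂ) 1, DifferentiableAt ℂ Φ w := fun w hw =>
    hΦ.differentiableAt (hU.mem_nhds (hsub hw))
  have hderiv_cont : ContinuousOn (deriv Φ) U := ((hΦ.analyticOnNhd hU).deriv).continuousOn
  have hΦe_cont : Continuous fun t : ℝ => Φ (cexp t) :=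
    hΦ.continuousOn.comp_continuous continuous_cexp hmemU
  have hde_cont : Continuous fun t : ℝ => deriv Φ (cexp t) :=
    hderiv_cont.comp_continuous continuous_cexp hmemU
  have gcont : Continuous g := hde_cont.norm
  have g0 : ∀ t, 0 ≤ g t := fun t => norm_nonneg _
  obtain ⟨M, hM⟩ := (isCompact_closedBall (0:ℂ) 1).exists_bound_of_continuousOn
    (hderiv_cont.mono hsub)
  have hM0 : 0 ≤ M := le_trans (norm_nonneg _) (hM 0 (Metric.mem_closedBall_self zero_le_one))
  have gM : ∀ t : ℝ, g t ≤ M := fun t => hM _ (cexp_mem t)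
  -- FTC along the arc
  have ftc : ∀ a b : ℝ, a ≤ b → ‖Φ (cexp b) - Φ (cexp a)‖ ≤ ∫ t in a..b, g t := by
    intro a b hab
    have hder : ∀ t ∈ Set.uIcc a b, HasDerivAt (fun s : ℝ => Φ (cexp s))
        (deriv Φ (cexp t) * (Complex.I * cexp t)) t := by
      intro t _
      have houter : HasDerivAt Φ (deriv Φ (cexp t)) (cexp t) :=
        (hΦd _ (cexp_mem t)).hasDerivAt
      exact houter.comp t (hasDerivAt_cexp t)
    have hint : IntervalIntegrable (fun t => deriv Φ (cexp t) * (Complex.I * cexp t))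
        volume a b :=
      (hde_cont.mul (continuous_const.mul continuous_cexp)).intervalIntegrable a b
    have heq := intervalIntegral.integral_eq_sub_of_hasDerivAt hder hint
    calc ‖Φ (cexp b) - Φ (cexp a)‖
        = ‖∫ t in a..b, deriv Φ (cexp t) * (Complex.I * cexp t)‖ := by rw [heq]
      _ ≤ ∫ t in a..b, ‖deriv Φ (cexp t) * (Complex.I * cexp t)‖ :=
          intervalIntegral.norm_integral_le_integral_norm hab
      _ = ∫ t in a..b, g t := by
          congr 1
          funext t
          rw [norm_mul, norm_mul, Complex.norm_I, norm_cexp, mul_one, mul_one]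
  -- difference quotient bound
  have DQle : ∀ a b : ℝ, a < b → b - a ≤ π →
      ‖(Φ (cexp b) - Φ (cexp a)) / (cexp b - cexp a)‖ ≤
        (π / 2) * ((∫ t in a..b, g t) / (b - a)) := by
    intro a b hab hπab
    have hchord := chord hab.le hπab
    have hpos : 0 < (2 / π) * (b - a) := by
      have : 0 < b - a := by linarith
      positivity
    have hint0 : 0 ≤ ∫ t in a..b, g t :=
      intervalIntegral.integral_nonneg hab.le fun u _ => g0 u
    rw [norm_div]
    calc ‖Φ (cexp b) - Φ (cexp a)‖ / ‖cexp b - cexp a‖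
        ≤ (∫ t in a..b, g t) / ((2 / π) * (b - a)) :=
          div_le_div₀ hint0 (ftc a b hab.le) hpos hchord
      _ = (π / 2) * ((∫ t in a..b, g t) / (b - a)) := by
          rw [div_mul_eq_div_div_swap]
          rw [div_div_eq_mul_div, div_mul_eq_mul_div, mul_comm]
          ring_nf
  -- boundedness of the difference quotient
  have DQbnd : ∀ ψ : ℝ, ‖if cexp ψ = cexp θ then deriv Φ (cexp θ) else
      (Φ (cexp ψ) - Φ (cexp θ)) / (cexp ψ - cexp θ)‖ ≤ M := by
    intro ψ
    by_cases hcase : cexp ψ = cexp θ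
    · rw [if_pos hcase]; exact hM _ (cexp_mem θ)
    · rw [if_neg hcase]
      have hden : cexp ψ - cexp θ ≠ 0 := sub_ne_zero.2 hcase
      have himg := (convex_closedBall (0:ℂ) 1).norm_image_sub_le_of_norm_deriv_le hΦd
        hM (cexp_mem θ) (cexp_mem ψ)
      rw [norm_div, div_le_iff₀ (norm_pos_iff.2 hden)]
      exact himg
  have Qbnd : ∀ ψ : ℝ, |Q ψ| ≤ M ^ 2 := by
    intro ψ
    rw [hQdef]
    simp only
    rw [abs_of_nonneg (sq_nonneg _)]
    exact pow_le_pow_left₀ (norm_nonneg _) (DQbnd ψ) 2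
  have Qmeas : Measurable Q := by
    apply Measurable.pow_const
    apply Measurable.norm
    exact Measurable.ite (continuous_cexp.measurable (measurableSet_singleton (cexp θ)))
      measurable_const
      (((hΦe_cont.sub continuous_const).measurable).div
        ((continuous_cexp.sub continuous_const).measurable))
  have Qint : ∀ a b : ℝ, IntervalIntegrable Q volume a b :=
    bdd_int Q (M ^ 2) Qmeas Qbnd
  have Rint : ∀ a b : ℝ, IntervalIntegrable (fun ψ => g ψ ^ 2) volume a b := fun a b =>
    (gcont.pow 2).intervalIntegrable a b
  -- periodicity
  have Qper : Function.Periodic Q (2 * π) := by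
    intro ψ
    rw [hQdef]
    simp only
    rw [cexp_periodic ψ]
  have Rper : Function.Periodic (fun ψ => g ψ ^ 2) (2 * π) := by
    intro ψ
    simp only [hgdef]
    rw [cexp_periodic ψ]
  have hshift : (θ - π) + 2 * π = θ + π := by ring
  have QLHS : (∫ ψ in (0:ℝ)..(2 * π), Q ψ) = ∫ ψ in (θ - π)..(θ + π), Q ψ := by
    have h := Qper.intervalIntegral_add_eq 0 (θ - π)
    rw [zero_add, hshift] at h
    exact h
  have RLHS : (∫ ψ in (0:ℝ)..(2 * π), g ψ ^ 2) = ∫ ψ in (θ - π)..(θ + π), g ψ ^ 2 := by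
    have h := Rper.intervalIntegral_add_eq 0 (θ - π)
    rw [zero_add, hshift] at h
    exact h
  have hQsplit := intervalIntegral.integral_add_adjacent_intervals
    (Qint (θ - π) θ) (Qint θ (θ + π))
  have hRsplit := intervalIntegral.integral_add_adjacent_intervals
    (Rint (θ - π) θ) (Rint θ (θ + π))
  -- a.e. tool
  have h0ae : ∀ᵐ x ∂(volume.restrict (Set.Icc (0:ℝ) π)), x ≠ 0 := by
    refine ae_restrict_of_ae ?_
    refine ae_iff.2 ?_
    have : {x : ℝ | ¬x ≠ 0} = {0} := by ext x; simp
    rw [this]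
    exact Real.volume_singleton
  -- RIGHT HALF
  have right : (∫ ψ in θ..(θ + π), Q ψ) ≤ π ^ 2 * ∫ ψ in θ..(θ + π), g ψ ^ 2 := by
    have hQp : IntervalIntegrable (fun x => Q (θ + x)) volume 0 π :=
      bdd_int _ (M ^ 2) (Qmeas.comp (measurable_const.add measurable_id)) (fun x => Qbnd _) 0 π
    have hHcont : Continuous fun x : ℝ => ∫ t in (0:ℝ)..x, g (θ + t) :=
      intervalIntegral.continuous_primitive
        (fun a b => (gcont.comp (continuous_const.add continuous_id)).intervalIntegrable a b) 0
    have hHbd : ∀ x : ℝ, |(∫ t in (0:ℝ)..x, g (θ + t)) / x| ≤ M := by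
      intro x
      rcases eq_or_ne x 0 with rfl | hx0
      · simp [hM0]
      · have hb : ∀ t ∈ Set.uIoc (0:ℝ) x, ‖g (θ + t)‖ ≤ M := fun t _ => by
          rw [Real.norm_eq_abs, abs_of_nonneg (g0 _)]; exact gM _
        have h1 := intervalIntegral.norm_integral_le_of_norm_le_const hb
        rw [sub_zero, Real.norm_eq_abs] at h1
        rw [abs_div, div_le_iff₀ (abs_pos.2 hx0)]
        exact h1
    have hBint : IntervalIntegrable
        (fun x => (π / 2) ^ 2 * ((∫ t in (0:ℝ)..x, g (θ + t)) / x) ^ 2) volume 0 π := by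
      apply bdd_int _ ((π / 2) ^ 2 * M ^ 2)
      · exact measurable_const.mul ((hHcont.measurable.div measurable_id).pow_const 2)
      · intro x
        rw [abs_mul, abs_of_nonneg (sq_nonneg ((π:ℝ) / 2)), abs_of_nonneg (sq_nonneg _)]
        have := hHbd x
        have h2 : ((∫ t in (0:ℝ)..x, g (θ + t)) / x) ^ 2 ≤ M ^ 2 := by
          rw [← sq_abs]
          exact pow_le_pow_left₀ (abs_nonneg _) this 2
        nlinarith [sq_nonneg ((π:ℝ) / 2)]
    have hmono : (∫ x in (0:ℝ)..π, Q (θ + x)) ≤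
        ∫ x in (0:ℝ)..π, (π / 2) ^ 2 * ((∫ t in (0:ℝ)..x, g (θ + t)) / x) ^ 2 := by
      apply intervalIntegral.integral_mono_ae_restrict hπ.le hQp hBint
      filter_upwards [h0ae, ae_restrict_mem measurableSet_Icc] with x hx0 hxI
      have hx : 0 < x := lt_of_le_of_ne hxI.1 (Ne.symm hx0)
      have hxπ : x ≤ π := hxI.2
      have hne : cexp (θ + x) ≠ cexp θ := by
        apply cexp_ne
        · intro h; apply hx0; linarith [h]
        · rw [add_sub_cancel_left, abs_of_pos hx]; linarith
      have hDQ := DQle θ (θ + x) (by linarith) (by rw [add_sub_cancel_left]; exact hxπ)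
      rw [add_sub_cancel_left] at hDQ
      have hinner : (∫ t in θ..(θ + x), g t) = ∫ t in (0:ℝ)..x, g (θ + t) := by
        rw [intervalIntegral.integral_comp_add_left]
        norm_num
      rw [hinner] at hDQ
      rw [hQdef]
      simp only
      rw [if_neg hne]
      calc ‖(Φ (cexp (θ + x)) - Φ (cexp θ)) / (cexp (θ + x) - cexp θ)‖ ^ 2
          ≤ ((π / 2) * ((∫ t in (0:ℝ)..x, g (θ + t)) / x)) ^ 2 :=
            pow_le_pow_left₀ (norm_nonneg _) hDQ 2
        _ = (π / 2) ^ 2 * ((∫ t in (0:ℝ)..x, g (θ + t)) / x) ^ 2 := by ring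
    have hcv : (∫ x in (0:ℝ)..π, Q (θ + x)) = ∫ ψ in θ..(θ + π), Q ψ := by
      rw [intervalIntegral.integral_comp_add_left]
      norm_num
    have hpull : (∫ x in (0:ℝ)..π, (π / 2) ^ 2 * ((∫ t in (0:ℝ)..x, g (θ + t)) / x) ^ 2) =
        (π / 2) ^ 2 * ∫ x in (0:ℝ)..π, ((∫ t in (0:ℝ)..x, g (θ + t)) / x) ^ 2 :=
      intervalIntegral.integral_const_mul _ _
    have hhardy := hardy (fun t => g (θ + t))
      (gcont.comp (continuous_const.add continuous_id)) hπ
    have hgcv : (∫ x in (0:ℝ)..π, g (θ + x) ^ 2) = ∫ ψ in θ..(θ + π), g ψ ^ 2 := by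
      have h := intervalIntegral.integral_comp_add_left (fun ψ => g ψ ^ 2) θ (a := 0) (b := π)
      rw [add_zero] at h
      exact h
    calc (∫ ψ in θ..(θ + π), Q ψ) = ∫ x in (0:ℝ)..π, Q (θ + x) := hcv.symm
      _ ≤ ∫ x in (0:ℝ)..π, (π / 2) ^ 2 * ((∫ t in (0:ℝ)..x, g (θ + t)) / x) ^ 2 := hmono
      _ = (π / 2) ^ 2 * ∫ x in (0:ℝ)..π, ((∫ t in (0:ℝ)..x, g (θ + t)) / x) ^ 2 := hpull
      _ ≤ (π / 2) ^ 2 * (4 * ∫ x in (0:ℝ)..π, g (θ + x) ^ 2) := by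
          apply mul_le_mul_of_nonneg_left hhardy (sq_nonneg _)
      _ = π ^ 2 * ∫ x in (0:ℝ)..π, g (θ + x) ^ 2 := by ring
      _ = π ^ 2 * ∫ ψ in θ..(θ + π), g ψ ^ 2 := by rw [hgcv]
  -- LEFT HALF
  have left : (∫ ψ in (θ - π)..θ, Q ψ) ≤ π ^ 2 * ∫ ψ in (θ - π)..θ, g ψ ^ 2 := by
    have hQp : IntervalIntegrable (fun x => Q (θ - x)) volume 0 π :=
      bdd_int _ (M ^ 2) (Qmeas.comp (measurable_const.sub measurable_id)) (fun x => Qbnd _) 0 π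
    have hHcont : Continuous fun x : ℝ => ∫ t in (0:ℝ)..x, g (θ - t) :=
      intervalIntegral.continuous_primitive
        (fun a b => (gcont.comp (continuous_const.sub continuous_id)).intervalIntegrable a b) 0
    have hHbd : ∀ x : ℝ, |(∫ t in (0:ℝ)..x, g (θ - t)) / x| ≤ M := by
      intro x
      rcases eq_or_ne x 0 with rfl | hx0
      · simp [hM0]
      · have hb : ∀ t ∈ Set.uIoc (0:ℝ) x, ‖g (θ - t)‖ ≤ M := fun t _ => by
          rw [Real.norm_eq_abs, abs_of_nonneg (g0 _)]; exact gM _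
        have h1 := intervalIntegral.norm_integral_le_of_norm_le_const hb
        rw [sub_zero, Real.norm_eq_abs] at h1
        rw [abs_div, div_le_iff₀ (abs_pos.2 hx0)]
        exact h1
    have hBint : IntervalIntegrable
        (fun x => (π / 2) ^ 2 * ((∫ t in (0:ℝ)..x, g (θ - t)) / x) ^ 2) volume 0 π := by
      apply bdd_int _ ((π / 2) ^ 2 * M ^ 2)
      · exact measurable_const.mul ((hHcont.measurable.div measurable_id).pow_const 2)
      · intro x
        rw [abs_mul, abs_of_nonneg (sq_nonneg ((π:ℝ) / 2)), abs_of_nonneg (sq_nonneg _)]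
        have := hHbd x
        have h2 : ((∫ t in (0:ℝ)..x, g (θ - t)) / x) ^ 2 ≤ M ^ 2 := by
          rw [← sq_abs]
          exact pow_le_pow_left₀ (abs_nonneg _) this 2
        nlinarith [sq_nonneg ((π:ℝ) / 2)]
    have hmono : (∫ x in (0:ℝ)..π, Q (θ - x)) ≤
        ∫ x in (0:ℝ)..π, (π / 2) ^ 2 * ((∫ t in (0:ℝ)..x, g (θ - t)) / x) ^ 2 := by
      apply intervalIntegral.integral_mono_ae_restrict hπ.le hQp hBint
      filter_upwards [h0ae, ae_restrict_mem measurableSet_Icc] with x hx0 hxI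
      have hx : 0 < x := lt_of_le_of_ne hxI.1 (Ne.symm hx0)
      have hxπ : x ≤ π := hxI.2
      have hne : cexp (θ - x) ≠ cexp θ := by
        apply cexp_ne
        · intro h; apply hx0; linarith [h]
        · rw [sub_sub_cancel_left, abs_neg, abs_of_pos hx]; linarith
      have hDQ := DQle (θ - x) θ (by linarith) (by rw [sub_sub_cancel]; exact hxπ)
      rw [sub_sub_cancel] at hDQ
      have hinner : (∫ t in (θ - x)..θ, g t) = ∫ t in (0:ℝ)..x, g (θ - t) := by
        rw [intervalIntegral.integral_comp_sub_left]
        norm_num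
      rw [hinner] at hDQ
      have hsym : (Φ (cexp (θ - x)) - Φ (cexp θ)) / (cexp (θ - x) - cexp θ) =
          (Φ (cexp θ) - Φ (cexp (θ - x))) / (cexp θ - cexp (θ - x)) := by
        rw [← neg_sub (Φ (cexp θ)) (Φ (cexp (θ - x))), ← neg_sub (cexp θ) (cexp (θ - x)),
          neg_div_neg_eq]
      rw [hQdef]
      simp only
      rw [if_neg hne, hsym]
      calc ‖(Φ (cexp θ) - Φ (cexp (θ - x))) / (cexp θ - cexp (θ - x))‖ ^ 2
          ≤ ((π / 2) * ((∫ t in (0:ℝ)..x, g (θ - t)) / x)) ^ 2 :=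
            pow_le_pow_left₀ (norm_nonneg _) hDQ 2
        _ = (π / 2) ^ 2 * ((∫ t in (0:ℝ)..x, g (θ - t)) / x) ^ 2 := by ring
    have hcv : (∫ x in (0:ℝ)..π, Q (θ - x)) = ∫ ψ in (θ - π)..θ, Q ψ := by
      rw [intervalIntegral.integral_comp_sub_left]
      norm_num
    have hpull : (∫ x in (0:ℝ)..π, (π / 2) ^ 2 * ((∫ t in (0:ℝ)..x, g (θ - t)) / x) ^ 2) =
        (π / 2) ^ 2 * ∫ x in (0:ℝ)..π, ((∫ t in (0:ℝ)..x, g (θ - t)) / x) ^ 2 :=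
      intervalIntegral.integral_const_mul _ _
    have hhardy := hardy (fun t => g (θ - t))
      (gcont.comp (continuous_const.sub continuous_id)) hπ
    have hgcv : (∫ x in (0:ℝ)..π, g (θ - x) ^ 2) = ∫ ψ in (θ - π)..θ, g ψ ^ 2 := by
      have h := intervalIntegral.integral_comp_sub_left (fun ψ => g ψ ^ 2) θ (a := 0) (b := π)
      rw [sub_zero] at h
      exact h
    calc (∫ ψ in (θ - π)..θ, Q ψ) = ∫ x in (0:ℝ)..π, Q (θ - x) := hcv.symm
      _ ≤ ∫ x in (0:ℝ)..π, (π / 2) ^ 2 * ((∫ t in (0:ℝ)..x, g (θ - t)) / x) ^ 2 := hmono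
      _ = (π / 2) ^ 2 * ∫ x in (0:ℝ)..π, ((∫ t in (0:ℝ)..x, g (θ - t)) / x) ^ 2 := hpull
      _ ≤ (π / 2) ^ 2 * (4 * ∫ x in (0:ℝ)..π, g (θ - x) ^ 2) := by
          apply mul_le_mul_of_nonneg_left hhardy (sq_nonneg _)
      _ = π ^ 2 * ∫ x in (0:ℝ)..π, g (θ - x) ^ 2 := by ring
      _ = π ^ 2 * ∫ ψ in (θ - π)..θ, g ψ ^ 2 := by rw [hgcv]
  -- combine
  rw [QLHS, RLHS, ← hQsplit, ← hRsplit]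
  calc (∫ ψ in (θ - π)..θ, Q ψ) + ∫ ψ in θ..(θ + π), Q ψ
      ≤ π ^ 2 * (∫ ψ in (θ - π)..θ, g ψ ^ 2) + π ^ 2 * ∫ ψ in θ..(θ + π), g ψ ^ 2 :=
        add_le_add left right
    _ = π ^ 2 * ((∫ ψ in (θ - π)..θ, g ψ ^ 2) + ∫ ψ in θ..(θ + π), g ψ ^ 2) := by ring
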